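/- Let σ, ρ ∈ S_{m+n} with σ ≤_L ρ, and let J be an m-element subset of [m+n] such that some γ ∈ [σ,ρ]_L satisfies γ^{-1}([1,m]) = J. Then the set {γ ∈ [σ,ρ]_L : γ^{-1}([1,m]) = J} is itself a left weak Bruhat interval [σ_J, ρ^J]_L, where σ_J := perm_{σ(J)} σ and ρ^J := perm^{(w_0ρ)(J)} w_0 ρ; in particular this set has a minimum and a maximum in the left weak Bruhat order. -/

import Mathlib

open scoped Classical

noncomputable section

/-- The symmetric group `S_{n+1}` (the paper's `S_n` with `n = n+1`). -/
abbrev SG (n : ℕ) := Equiv.Perm (Fin (n + 1))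

/-- The simple transposition `s_{i+1}` (adjacent transposition swapping `i` and `i+1`,
0-indexed). -/
def sgen {n : ℕ} (i : Fin n) : SG n := Equiv.swap i.castSucc i.succ

/-- Coxeter length of a permutation, i.e. its number of inversions. -/
def len {n : ℕ} (σ : SG n) : ℕ :=
  (Finset.univ.filter fun p : Fin (n + 1) × Fin (n + 1) => p.1 < p.2 ∧ σ p.2 < σ p.1).card

/-- The left weak Bruhat order on `S_{n+1}`. -/
def leL {n : ℕ} (σ ρ : SG n) : Prop := ∃ γ, ρ = γ * σ ∧ len ρ = len σ + len γ

/-- Left descent set. -/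
def DesL {n : ℕ} (σ : SG n) : Set (Fin n) := {i | len (sgen i * σ) < len σ}

/-- Right descent set. -/
def DesR {n : ℕ} (σ : SG n) : Set (Fin n) := {i | len (σ * sgen i) < len σ}

/-- The longest element `w₀` of `S_{n+1}`. -/
def w0 {n : ℕ} : SG n := ⟨Fin.rev, Fin.rev, Fin.rev_rev, Fin.rev_rev⟩

lemma len_one {n : ℕ} : len (1 : SG n) = 0 := by
  unfold len
  rw [Finset.card_eq_zero, Finset.eq_empty_iff_forall_notMem]
  rintro p hp
  rw [Finset.mem_filter] at hp
  obtain ⟨-, h1, h2⟩ := hp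
  simp only [Equiv.Perm.one_apply] at h2
  exact absurd (h1.trans h2) (lt_irrefl _)

lemma leL_refl {n : ℕ} (σ : SG n) : leL σ σ :=
  ⟨1, (one_mul σ).symm, by simp [len_one]⟩

/-- The defining relations of the 0-Hecke algebra `H_{n+1}(0)`. -/
inductive HRel (n : ℕ) : FreeAlgebra ℂ (Fin n) → FreeAlgebra ℂ (Fin n) → Prop
  | idem (i : Fin n) :
      HRel n (FreeAlgebra.ι ℂ i * FreeAlgebra.ι ℂ i) (FreeAlgebra.ι ℂ i)
  | braid (i j : Fin n) (h : (i : ℕ) + 1 = j) :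
      HRel n (FreeAlgebra.ι ℂ i * FreeAlgebra.ι ℂ j * FreeAlgebra.ι ℂ i)
             (FreeAlgebra.ι ℂ j * FreeAlgebra.ι ℂ i * FreeAlgebra.ι ℂ j)
  | comm (i j : Fin n) (h : (i : ℕ) + 2 ≤ j) :
      HRel n (FreeAlgebra.ι ℂ i * FreeAlgebra.ι ℂ j) (FreeAlgebra.ι ℂ j * FreeAlgebra.ι ℂ i)

/-- The 0-Hecke algebra `H_{n+1}(0)` over `ℂ`. -/
abbrev Hecke (n : ℕ) := RingQuot (HRel n)

/-- The generator `π_{i+1}` of the 0-Hecke algebra. -/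
def hpi {n : ℕ} (i : Fin n) : Hecke n :=
  RingQuot.mkAlgHom ℂ (HRel n) (FreeAlgebra.ι ℂ i)

/-- The element `π̄_{i+1} = π_{i+1} - 1`. -/
def hpibar {n : ℕ} (i : Fin n) : Hecke n := hpi i - 1

/-- `l` is a reduced word for `σ`. -/
def IsReducedWord {n : ℕ} (l : List (Fin n)) (σ : SG n) : Prop :=
  (l.map sgen).prod = σ ∧ l.length = len σ

/-- `π_σ`, the product of the generators `π_i` along a reduced word for `σ`. -/
noncomputable def piPerm {n : ℕ} (σ : SG n) : Hecke n :=
  if h : ∃ l : List (Fin n), IsReducedWord l σ then ((h.choose.map hpi).prod) else 0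

/-- `π̄_σ`, the product of the elements `π̄_i` along a reduced word for `σ`. -/
noncomputable def pibarPerm {n : ℕ} (σ : SG n) : Hecke n :=
  if h : ∃ l : List (Fin n), IsReducedWord l σ then ((h.choose.map hpibar).prod) else 0

/-- The left weak Bruhat interval `[σ,ρ]_L`. -/
abbrev Itv {n : ℕ} (σ ρ : SG n) := {γ : SG n // leL σ γ ∧ leL γ ρ}

/-- The action of the generator `π_{i+1}` on a basis element of `ℂ[σ,ρ]_L`. -/
noncomputable def bpiFun {n : ℕ} (σ ρ : SG n) (i : Fin n) (γ : Itv σ ρ) :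
    Itv σ ρ →₀ ℂ :=
  if i ∈ DesL γ.1 then Finsupp.single γ 1
  else if h : leL σ (sgen i * γ.1) ∧ leL (sgen i * γ.1) ρ then
    Finsupp.single ⟨sgen i * γ.1, h⟩ 1
  else 0

/-- The operator `𝛑_i` on `ℂ[σ,ρ]_L` (the action of `π_{i+1}` on `B(σ,ρ)`). -/
noncomputable def bpi {n : ℕ} (σ ρ : SG n) (i : Fin n) :
    (Itv σ ρ →₀ ℂ) →ₗ[ℂ] (Itv σ ρ →₀ ℂ) :=
  Finsupp.lift _ ℂ _ (bpiFun σ ρ i)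

/-- The action of `π̄_{i+1}` on a basis element of the module `B̄(σ,ρ)`. -/
noncomputable def bbarFun {n : ℕ} (σ ρ : SG n) (i : Fin n) (γ : Itv σ ρ) :
    Itv σ ρ →₀ ℂ :=
  if i ∈ DesL γ.1 then -Finsupp.single γ 1
  else if h : leL σ (sgen i * γ.1) ∧ leL (sgen i * γ.1) ρ then
    Finsupp.single ⟨sgen i * γ.1, h⟩ 1
  else 0

/-- The operator giving the action of `π̄_{i+1}` on `B̄(σ,ρ)`. -/
noncomputable def bbar {n : ℕ} (σ ρ : SG n) (i : Fin n) :
    (Itv σ ρ →₀ ℂ) →ₗ[ℂ] (Itv σ ρ →₀ ℂ) :=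
  Finsupp.lift _ ℂ _ (bbarFun σ ρ i)

/-- `perm_J`: the permutation sending the `k`-th smallest element of `J` to `k` and the
`s`-th smallest element of the complement of `J` to `m + s` (0-indexed). -/
noncomputable def permJdown {N : ℕ} (m : ℕ) (hm : m ≤ N + 1) (J : Finset (Fin (N + 1)))
    (hJ : J.card = m) : SG N :=
  (Equiv.sumCompl (· ∈ J)).symm.trans
    ((Equiv.sumCongr (J.orderIsoOfFin hJ).toEquiv.symm
        ((Equiv.subtypeEquivRight (fun x => (Finset.mem_compl (a := x)).symm)).trans
          (Jᶜ.orderIsoOfFin (by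
              rw [Finset.card_compl, hJ, Fintype.card_fin])).toEquiv.symm)).trans
      (finSumFinEquiv.trans (finCongr (by omega))))

/-- `perm^J`: the permutation sending the `k`-th smallest element of `J` to `m - k + 1` and
the `s`-th smallest element of the complement of `J` to `m + n - s + 1` (here 0-indexed:
each block is reversed). -/
noncomputable def permJup {N : ℕ} (m : ℕ) (hm : m ≤ N + 1) (J : Finset (Fin (N + 1)))
    (hJ : J.card = m) : SG N :=
  (Equiv.sumCompl (· ∈ J)).symm.trans
    ((Equiv.sumCongr ((J.orderIsoOfFin hJ).toEquiv.symm.trans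
          (Fin.revPerm : Equiv.Perm (Fin m)))
        (((Equiv.subtypeEquivRight (fun x => (Finset.mem_compl (a := x)).symm)).trans
          (Jᶜ.orderIsoOfFin (by
              rw [Finset.card_compl, hJ, Fintype.card_fin])).toEquiv.symm).trans
          (Fin.revPerm : Equiv.Perm (Fin (N + 1 - m))))).trans
      (finSumFinEquiv.trans (finCongr (by omega))))

namespace Stmt14Aux

/-- The inversion set of a permutation, as ordered pairs of positions. -/
def InvS {n : ℕ} (σ : SG n) : Finset (Fin (n + 1) × Fin (n + 1)) :=
  Finset.univ.filter fun p : Fin (n + 1) × Fin (n + 1) => p.1 < p.2 ∧ σ p.2 < σ p.1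

lemma len_eq_card {n : ℕ} (σ : SG n) : len σ = (InvS σ).card := rfl

lemma mem_InvS {n : ℕ} {σ : SG n} {p : Fin (n + 1) × Fin (n + 1)} :
    p ∈ InvS σ ↔ p.1 < p.2 ∧ σ p.2 < σ p.1 := by
  simp [InvS]

lemma card_B {n : ℕ} (σ γ : SG n) :
    (Finset.univ.filter fun p : Fin (n + 1) × Fin (n + 1) => p.1 < p.2 ∧
      ((σ p.1 < σ p.2 ∧ γ (σ p.2) < γ (σ p.1)) ∨
        (σ p.2 < σ p.1 ∧ γ (σ p.1) < γ (σ p.2)))).card = len γ := by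
  rw [len_eq_card]
  refine Finset.card_bij'
    (fun p _ => if σ p.1 < σ p.2 then (σ p.1, σ p.2) else (σ p.2, σ p.1))
    (fun q _ => if σ⁻¹ q.1 < σ⁻¹ q.2 then (σ⁻¹ q.1, σ⁻¹ q.2) else (σ⁻¹ q.2, σ⁻¹ q.1))
    ?_ ?_ ?_ ?_
  · intro a ha
    simp only [Finset.mem_filter, Finset.mem_univ, true_and] at ha
    obtain ⟨h12, hd⟩ := ha
    rcases hd with ⟨h1, h2⟩ | ⟨h1, h2⟩
    · rw [if_pos h1]; exact mem_InvS.2 ⟨h1, h2⟩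
    · rw [if_neg (asymm h1)]; exact mem_InvS.2 ⟨h1, h2⟩
  · intro a ha
    rw [mem_InvS] at ha
    obtain ⟨h1, h2⟩ := ha
    have hne : σ⁻¹ a.1 ≠ σ⁻¹ a.2 := fun e => absurd ((σ⁻¹).injective e) (ne_of_lt h1)
    by_cases h : σ⁻¹ a.1 < σ⁻¹ a.2
    · rw [if_pos h]
      simp only [Finset.mem_filter, Finset.mem_univ, true_and, Equiv.Perm.coe_inv, Equiv.apply_symm_apply]
      exact ⟨h, Or.inl ⟨h1, h2⟩⟩
    · rw [if_neg h]
      have h' : σ⁻¹ a.2 < σ⁻¹ a.1 := (hne.lt_or_gt).resolve_left h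
      simp only [Finset.mem_filter, Finset.mem_univ, true_and, Equiv.Perm.coe_inv, Equiv.apply_symm_apply]
      exact ⟨h', Or.inr ⟨h1, h2⟩⟩
  · intro a ha
    simp only [Finset.mem_filter, Finset.mem_univ, true_and] at ha
    obtain ⟨h12, _⟩ := ha
    by_cases h : σ a.1 < σ a.2
    · rw [if_pos h]
      simp only [Equiv.Perm.coe_inv, Equiv.symm_apply_apply]
      rw [if_pos h12]
    · rw [if_neg h]
      simp only [Equiv.Perm.coe_inv, Equiv.symm_apply_apply]
      rw [if_neg (asymm h12)]
  · intro a ha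
    rw [mem_InvS] at ha
    obtain ⟨h12, _⟩ := ha
    by_cases h : σ⁻¹ a.1 < σ⁻¹ a.2
    · rw [if_pos h]
      simp only [Equiv.Perm.coe_inv, Equiv.apply_symm_apply]
      rw [if_pos h12]
    · rw [if_neg h]
      simp only [Equiv.Perm.coe_inv, Equiv.apply_symm_apply]
      rw [if_neg (asymm h12)]

lemma leL_iff {n : ℕ} {σ ρ : SG n} : leL σ ρ ↔ InvS σ ⊆ InvS ρ := by
  have h1 : leL σ ρ ↔ len ρ = len σ + len (ρ * σ⁻¹) := by
    constructor
    · rintro ⟨γ, rfl, h2⟩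
      rwa [show γ * σ * σ⁻¹ = γ by group]
    · intro h; exact ⟨ρ * σ⁻¹, by group, h⟩
  rw [h1]
  set γ := ρ * σ⁻¹ with hγdef
  have hfun : ∀ x, ρ x = γ (σ x) := by
    intro x; rw [hγdef]; simp
  set B := (Finset.univ.filter fun p : Fin (n + 1) × Fin (n + 1) => p.1 < p.2 ∧
      ((σ p.1 < σ p.2 ∧ γ (σ p.2) < γ (σ p.1)) ∨
        (σ p.2 < σ p.1 ∧ γ (σ p.1) < γ (σ p.2)))) with hB
  have memB : ∀ p : Fin (n + 1) × Fin (n + 1), p ∈ B ↔ p.1 < p.2 ∧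
      ((σ p.1 < σ p.2 ∧ γ (σ p.2) < γ (σ p.1)) ∨
        (σ p.2 < σ p.1 ∧ γ (σ p.1) < γ (σ p.2))) := by
    intro p; rw [hB]; simp
  have vals : ∀ p : Fin (n + 1) × Fin (n + 1), p.1 ≠ p.2 →
      ((σ p.1 : ℕ) ≠ (σ p.2 : ℕ) ∧ ((γ (σ p.1) : ℕ) ≠ (γ (σ p.2) : ℕ))) := by
    intro p hne
    refine ⟨fun h => hne (σ.injective (Fin.val_injective h)),
      fun h => hne (σ.injective (γ.injective (Fin.val_injective h)))⟩
  have e1 : InvS ρ ∪ (InvS σ ∩ B) = InvS σ ∪ B := by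
    ext p
    rw [Finset.mem_union, Finset.mem_union, Finset.mem_inter, mem_InvS, mem_InvS, memB]
    by_cases hp : p.1 < p.2
    · obtain ⟨hv1, hv2⟩ := vals p (ne_of_lt hp)
      rw [hfun p.1, hfun p.2]
      simp only [hp, true_and, Fin.lt_def]
      omega
    · simp [hp]
  have e2 : Disjoint (InvS ρ) (InvS σ ∩ B) := by
    rw [Finset.disjoint_left]
    intro p hpρ hpi
    rw [Finset.mem_inter, mem_InvS, memB] at hpi
    rw [mem_InvS] at hpρ
    obtain ⟨⟨hp, hσi⟩, -, hBB⟩ := hpi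
    obtain ⟨-, hρi⟩ := hpρ
    obtain ⟨hv1, hv2⟩ := vals p (ne_of_lt hp)
    rw [hfun p.1, hfun p.2] at hρi
    rw [Fin.lt_def] at hσi hρi
    rcases hBB with ⟨hc, -⟩ | ⟨-, hc⟩
    · rw [Fin.lt_def] at hc; omega
    · rw [Fin.lt_def] at hc; omega
  have e3 : (InvS ρ).card + 2 * (InvS σ ∩ B).card = (InvS σ).card + B.card := by
    have hcui := Finset.card_union_add_card_inter (InvS σ) B
    rw [← e1, Finset.card_union_of_disjoint e2] at hcui
    omega
  have hBcard : B.card = len γ := card_B σ γ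
  rw [len_eq_card ρ, len_eq_card σ, ← hBcard]
  constructor
  · intro h
    have h0 : (InvS σ ∩ B) = ∅ := Finset.card_eq_zero.1 (by omega)
    intro p hpσ
    have hmem : p ∈ InvS ρ ∪ (InvS σ ∩ B) := by
      rw [e1]; exact Finset.mem_union_left _ hpσ
    rcases Finset.mem_union.1 hmem with h' | h'
    · exact h'
    · rw [h0] at h'; exact absurd h' (Finset.notMem_empty _)
  · intro hsub
    have h0 : InvS σ ∩ B = ∅ := by
      rw [Finset.eq_empty_iff_forall_notMem]
      intro p hp
      exact (Finset.disjoint_left.1 e2) (hsub (Finset.mem_inter.1 hp).1) hp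
    rw [h0] at e3
    simpa using e3

end Stmt14Aux

namespace Stmt14Aux

variable {N m : ℕ}

lemma permJdown_val_mem (hm : m ≤ N + 1) (K : Finset (Fin (N + 1))) (hK : K.card = m)
    {x : Fin (N + 1)} (hx : x ∈ K) :
    ((permJdown m hm K hK) x : ℕ) = ((K.orderIsoOfFin hK).symm ⟨x, hx⟩ : ℕ) := by
  simp [permJdown, Equiv.sumCompl_symm_apply_of_pos (p := (· ∈ K)) hx]

lemma permJdown_val_not_mem (hm : m ≤ N + 1) (K : Finset (Fin (N + 1))) (hK : K.card = m)
    {x : Fin (N + 1)} (hx : x ∉ K) :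
    ((permJdown m hm K hK) x : ℕ) =
      m + ((Kᶜ.orderIsoOfFin (by rw [Finset.card_compl, hK, Fintype.card_fin])).symm
        ⟨x, by simpa using hx⟩ : ℕ) := by
  simp [permJdown, Equiv.sumCompl_symm_apply_of_neg (p := (· ∈ K)) hx, Equiv.subtypeEquivRight_apply]

lemma permJdown_lt_m_iff (hm : m ≤ N + 1) (K : Finset (Fin (N + 1))) (hK : K.card = m)
    (x : Fin (N + 1)) : ((permJdown m hm K hK) x : ℕ) < m ↔ x ∈ K := by
  by_cases hx : x ∈ K
  · simp only [hx, iff_true, permJdown_val_mem hm K hK hx]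
    exact ((K.orderIsoOfFin hK).symm ⟨x, hx⟩).isLt
  · simp only [hx, iff_false, not_lt, permJdown_val_not_mem hm K hK hx]
    omega

lemma permJdown_lt_iff_mem (hm : m ≤ N + 1) (K : Finset (Fin (N + 1))) (hK : K.card = m)
    {x y : Fin (N + 1)} (hx : x ∈ K) (hy : y ∈ K) :
    (permJdown m hm K hK) x < (permJdown m hm K hK) y ↔ x < y := by
  rw [Fin.lt_def, permJdown_val_mem hm K hK hx, permJdown_val_mem hm K hK hy, ← Fin.lt_def,
    OrderIso.lt_iff_lt]
  exact Subtype.mk_lt_mk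

lemma permJdown_lt_iff_not_mem (hm : m ≤ N + 1) (K : Finset (Fin (N + 1))) (hK : K.card = m)
    {x y : Fin (N + 1)} (hx : x ∉ K) (hy : y ∉ K) :
    (permJdown m hm K hK) x < (permJdown m hm K hK) y ↔ x < y := by
  rw [Fin.lt_def, permJdown_val_not_mem hm K hK hx, permJdown_val_not_mem hm K hK hy,
    Nat.add_lt_add_iff_left, ← Fin.lt_def, OrderIso.lt_iff_lt]
  exact Subtype.mk_lt_mk

lemma permJup_val_mem (hm : m ≤ N + 1) (K : Finset (Fin (N + 1))) (hK : K.card = m)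
    {x : Fin (N + 1)} (hx : x ∈ K) :
    ((permJup m hm K hK) x : ℕ) = (((K.orderIsoOfFin hK).symm ⟨x, hx⟩).rev : ℕ) := by
  simp [permJup, Equiv.sumCompl_symm_apply_of_pos (p := (· ∈ K)) hx]

lemma permJup_val_not_mem (hm : m ≤ N + 1) (K : Finset (Fin (N + 1))) (hK : K.card = m)
    {x : Fin (N + 1)} (hx : x ∉ K) :
    ((permJup m hm K hK) x : ℕ) =
      m + (((Kᶜ.orderIsoOfFin (by rw [Finset.card_compl, hK, Fintype.card_fin])).symm
        ⟨x, by simpa using hx⟩).rev : ℕ) := by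
  simp [permJup, Equiv.sumCompl_symm_apply_of_neg (p := (· ∈ K)) hx, Equiv.subtypeEquivRight_apply]

lemma permJup_lt_m_iff (hm : m ≤ N + 1) (K : Finset (Fin (N + 1))) (hK : K.card = m)
    (x : Fin (N + 1)) : ((permJup m hm K hK) x : ℕ) < m ↔ x ∈ K := by
  by_cases hx : x ∈ K
  · simp only [hx, iff_true, permJup_val_mem hm K hK hx]
    exact (((K.orderIsoOfFin hK).symm ⟨x, hx⟩).rev).isLt
  · simp only [hx, iff_false, not_lt, permJup_val_not_mem hm K hK hx]
    omega

lemma permJup_lt_iff_mem (hm : m ≤ N + 1) (K : Finset (Fin (N + 1))) (hK : K.card = m)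
    {x y : Fin (N + 1)} (hx : x ∈ K) (hy : y ∈ K) :
    (permJup m hm K hK) x < (permJup m hm K hK) y ↔ y < x := by
  rw [Fin.lt_def, permJup_val_mem hm K hK hx, permJup_val_mem hm K hK hy, ← Fin.lt_def,
    Fin.rev_lt_rev, OrderIso.lt_iff_lt]
  exact Subtype.mk_lt_mk

lemma permJup_lt_iff_not_mem (hm : m ≤ N + 1) (K : Finset (Fin (N + 1))) (hK : K.card = m)
    {x y : Fin (N + 1)} (hx : x ∉ K) (hy : y ∉ K) :
    (permJup m hm K hK) x < (permJup m hm K hK) y ↔ y < x := by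
  rw [Fin.lt_def, permJup_val_not_mem hm K hK hx, permJup_val_not_mem hm K hK hy,
    Nat.add_lt_add_iff_left, ← Fin.lt_def, Fin.rev_lt_rev, OrderIso.lt_iff_lt]
  exact Subtype.mk_lt_mk

lemma sep_count (hm : m ≤ N + 1) (γ : SG N) (J : Finset (Fin (N + 1))) (hJ : J.card = m)
    (H : ∀ p ∈ J, ∀ q ∉ J, γ p < γ q) (x : Fin (N + 1)) : ((γ x : ℕ) < m ↔ x ∈ J) := by
  have hT : (Finset.univ.filter fun v : Fin (N + 1) => (v : ℕ) < m)
      = Finset.image (Fin.castLE hm) Finset.univ := by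
    ext v
    rw [Finset.mem_filter, Finset.mem_image]
    constructor
    · rintro ⟨-, h⟩
      exact ⟨⟨(v : ℕ), h⟩, Finset.mem_univ _, by ext; rfl⟩
    · rintro ⟨i, -, rfl⟩
      exact ⟨Finset.mem_univ _, i.isLt⟩
  have hTcard : (Finset.univ.filter fun v : Fin (N + 1) => (v : ℕ) < m).card = m := by
    rw [hT, Finset.card_image_of_injective _ (Fin.castLE_injective hm), Finset.card_univ,
      Fintype.card_fin]
  have hsub : J.image ⇑γ ⊆ Finset.univ.filter fun v : Fin (N + 1) => (v : ℕ) < m := by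
    intro a ha
    rw [Finset.mem_image] at ha
    obtain ⟨p, hp, rfl⟩ := ha
    simp only [Finset.mem_filter, Finset.mem_univ, true_and]
    by_contra hge
    push_neg at hge
    have hIic : Finset.Iic (γ p) ⊆ J.image ⇑γ := by
      intro v hv
      rw [Finset.mem_Iic] at hv
      by_cases hvJ : γ.symm v ∈ J
      · exact Finset.mem_image.2 ⟨γ.symm v, hvJ, γ.apply_symm_apply v⟩
      · exact absurd (H p hp _ hvJ) (by rw [γ.apply_symm_apply]; exact not_lt.2 hv)
    have hc := Finset.card_le_card hIic
    rw [Fin.card_Iic, Finset.card_image_of_injective _ γ.injective, hJ] at hc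
    omega
  have heq : J.image ⇑γ = Finset.univ.filter fun v : Fin (N + 1) => (v : ℕ) < m := by
    apply Finset.eq_of_subset_of_card_le hsub
    rw [hTcard, Finset.card_image_of_injective _ γ.injective, hJ]
  constructor
  · intro h
    have hmem : γ x ∈ J.image ⇑γ := by
      rw [heq]; exact Finset.mem_filter.2 ⟨Finset.mem_univ _, h⟩
    obtain ⟨p, hp, hpe⟩ := Finset.mem_image.1 hmem
    rwa [← γ.injective hpe]
  · intro h
    have hmem : γ x ∈ J.image ⇑γ := Finset.mem_image_of_mem _ h
    rw [heq, Finset.mem_filter] at hmem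
    exact hmem.2

end Stmt14Aux

open Stmt14Aux
/-- For `σ ≤_L ρ` and an `m`-subset `J` realized as `γ⁻¹([1,m])` for some `γ ∈ [σ,ρ]_L`,
the set `{γ ∈ [σ,ρ]_L : γ⁻¹([1,m]) = J}` is the left weak Bruhat interval
`[σ_J, ρ^J]_L` with `σ_J = perm_{σ(J)} σ` and `ρ^J = perm^{(w₀ρ)(J)} w₀ρ`. -/
theorem stmt14 (N m : ℕ) (hm : m ≤ N + 1) (σ ρ : SG N) (hσρ : leL σ ρ)
    (J : Finset (Fin (N + 1))) (hJ : J.card = m)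
    (hex : ∃ γ : SG N, (leL σ γ ∧ leL γ ρ) ∧ ∀ x : Fin (N + 1), ((γ x : ℕ) < m ↔ x ∈ J)) :
    ∀ γ : SG N,
      ((leL σ γ ∧ leL γ ρ) ∧ ∀ x : Fin (N + 1), ((γ x : ℕ) < m ↔ x ∈ J)) ↔
      (leL (permJdown m hm (J.image ⇑σ)
              (by rw [Finset.card_image_of_injective J σ.injective, hJ]) * σ) γ ∧
       leL γ (permJup m hm (J.image ⇑(w0 * ρ : SG N))
              (by rw [Finset.card_image_of_injective J (w0 * ρ : SG N).injective, hJ]) *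
            (w0 * ρ))) := by
  classical
  have hKσc : (J.image ⇑σ).card = m := by
    rw [Finset.card_image_of_injective J σ.injective, hJ]
  have hKρc : (J.image ⇑(w0 * ρ : SG N)).card = m := by
    rw [Finset.card_image_of_injective J (w0 * ρ : SG N).injective, hJ]
  intro γ
  show _ ↔ (leL (permJdown m hm (J.image ⇑σ) hKσc * σ) γ ∧
    leL γ (permJup m hm (J.image ⇑(w0 * ρ : SG N)) hKρc * (w0 * ρ)))
  set D := permJdown m hm (J.image ⇑σ) hKσc with hDdef
  set U := permJup m hm (J.image ⇑(w0 * ρ : SG N)) hKρc with hUdef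
  set σJ : SG N := D * σ with hσJdef
  set ρJ : SG N := U * (w0 * ρ) with hρJdef
  have hmemσ : ∀ x : Fin (N + 1), σ x ∈ J.image ⇑σ ↔ x ∈ J := by
    intro x
    constructor
    · intro h
      obtain ⟨y, hy, he⟩ := Finset.mem_image.1 h
      rwa [← σ.injective he]
    · exact fun h => Finset.mem_image_of_mem _ h
  have hmemρ : ∀ x : Fin (N + 1), (w0 * ρ : SG N) x ∈ J.image ⇑(w0 * ρ : SG N) ↔ x ∈ J := by
    intro x
    constructor
    · intro h
      obtain ⟨y, hy, he⟩ := Finset.mem_image.1 h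
      rwa [← (w0 * ρ : SG N).injective he]
    · exact fun h => Finset.mem_image_of_mem _ h
  have hσJ : ∀ x, σJ x = D (σ x) := fun _ => rfl
  have hρJ : ∀ x, ρJ x = U ((w0 * ρ : SG N) x) := fun _ => rfl
  have hw0 : ∀ x, (w0 * ρ : SG N) x = (ρ x).rev := fun _ => rfl
  -- value facts
  have f1 : ∀ x, ((σJ x : ℕ) < m ↔ x ∈ J) := by
    intro x
    rw [hσJ, hDdef, permJdown_lt_m_iff, hmemσ]
  have g1 : ∀ x, ((ρJ x : ℕ) < m ↔ x ∈ J) := by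
    intro x
    rw [hρJ, hUdef, permJup_lt_m_iff, hmemρ]
  -- same-block comparison facts
  have f2 : ∀ {x y : Fin (N + 1)}, (x ∈ J ↔ y ∈ J) → (σJ y < σJ x ↔ σ y < σ x) := by
    intro x y hxy
    rw [hσJ, hσJ, hDdef]
    by_cases hx : x ∈ J
    · exact permJdown_lt_iff_mem hm _ hKσc ((hmemσ y).2 (hxy.1 hx)) ((hmemσ x).2 hx)
    · have hy : y ∉ J := fun h => hx (hxy.2 h)
      exact permJdown_lt_iff_not_mem hm _ hKσc
        (fun h => hy ((hmemσ y).1 h)) (fun h => hx ((hmemσ x).1 h))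
  have g2 : ∀ {x y : Fin (N + 1)}, (x ∈ J ↔ y ∈ J) → (ρJ y < ρJ x ↔ ρ y < ρ x) := by
    intro x y hxy
    rw [hρJ, hρJ, hUdef]
    have hrev : ((w0 * ρ : SG N) x < (w0 * ρ : SG N) y) ↔ ρ y < ρ x := by
      rw [hw0, hw0, Fin.rev_lt_rev]
    by_cases hx : x ∈ J
    · rw [permJup_lt_iff_mem hm _ hKρc ((hmemρ y).2 (hxy.1 hx)) ((hmemρ x).2 hx)]
      exact hrev
    · have hy : y ∉ J := fun h => hx (hxy.2 h)
      rw [permJup_lt_iff_not_mem hm _ hKρc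
        (fun h => hy ((hmemρ y).1 h)) (fun h => hx ((hmemρ x).1 h))]
      exact hrev
  -- pair membership in InvS σJ / InvS ρJ
  have cσ1 : ∀ {p q : Fin (N + 1)}, p < q → (p ∈ J ↔ q ∈ J) →
      ((p, q) ∈ InvS σJ ↔ (p, q) ∈ InvS σ) := by
    intro p q hpq hJiff
    rw [mem_InvS, mem_InvS]
    simp only [hpq, true_and]
    exact f2 hJiff
  have cσ2 : ∀ {p q : Fin (N + 1)}, p < q → p ∉ J → q ∈ J → (p, q) ∈ InvS σJ := by
    intro p q hpq hp hq
    rw [mem_InvS]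
    refine ⟨hpq, ?_⟩
    show _ < _
    dsimp only
    rw [Fin.lt_def]
    have h1 := (f1 q).2 hq
    have h2 := f1 p
    simp only [hp, iff_false, not_lt] at h2
    omega
  have cσ3 : ∀ {p q : Fin (N + 1)}, p ∈ J → q ∉ J → (p, q) ∉ InvS σJ := by
    intro p q hp hq hmem
    rw [mem_InvS] at hmem
    dsimp only at hmem
    obtain ⟨-, hlt⟩ := hmem
    rw [Fin.lt_def] at hlt
    have h1 := (f1 p).2 hp
    have h2 := f1 q
    simp only [hq, iff_false, not_lt] at h2
    omega
  have cρ1 : ∀ {p q : Fin (N + 1)}, p < q → (p ∈ J ↔ q ∈ J) →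
      ((p, q) ∈ InvS ρJ ↔ (p, q) ∈ InvS ρ) := by
    intro p q hpq hJiff
    rw [mem_InvS, mem_InvS]
    simp only [hpq, true_and]
    exact g2 hJiff
  have cρ2 : ∀ {p q : Fin (N + 1)}, p < q → p ∉ J → q ∈ J → (p, q) ∈ InvS ρJ := by
    intro p q hpq hp hq
    rw [mem_InvS]
    refine ⟨hpq, ?_⟩
    show _ < _
    dsimp only
    rw [Fin.lt_def]
    have h1 := (g1 q).2 hq
    have h2 := g1 p
    simp only [hp, iff_false, not_lt] at h2
    omega
  have cρ3 : ∀ {p q : Fin (N + 1)}, p ∈ J → q ∉ J → (p, q) ∉ InvS ρJ := by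
    intro p q hp hq hmem
    rw [mem_InvS] at hmem
    dsimp only at hmem
    obtain ⟨-, hlt⟩ := hmem
    rw [Fin.lt_def] at hlt
    have h1 := (g1 p).2 hp
    have h2 := g1 q
    simp only [hq, iff_false, not_lt] at h2
    omega
  -- facts from the witness γ₀
  obtain ⟨γ₀, ⟨hσγ₀, hγ₀ρ⟩, hγ₀J⟩ := hex
  rw [leL_iff] at hσγ₀ hγ₀ρ
  have hMixρ : ∀ {p q : Fin (N + 1)}, p < q → p ∉ J → q ∈ J → (p, q) ∈ InvS ρ := by
    intro p q hpq hp hq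
    refine hγ₀ρ (mem_InvS.2 ⟨hpq, ?_⟩)
    show _ < _
    dsimp only
    rw [Fin.lt_def]
    have h1 := (hγ₀J q).2 hq
    have h2 := hγ₀J p
    simp only [hp, iff_false, not_lt] at h2
    omega
  have hMixσ : ∀ {p q : Fin (N + 1)}, p ∈ J → q ∉ J → (p, q) ∉ InvS σ := by
    intro p q hp hq hmem
    have hmem' := hσγ₀ hmem
    rw [mem_InvS] at hmem'
    dsimp only at hmem'
    obtain ⟨-, hlt⟩ := hmem'
    rw [Fin.lt_def] at hlt
    have h1 := (hγ₀J p).2 hp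
    have h2 := hγ₀J q
    simp only [hq, iff_false, not_lt] at h2
    omega
  rw [leL_iff, leL_iff, leL_iff (σ := σJ), leL_iff (ρ := ρJ)]
  constructor
  · rintro ⟨⟨h1, h2⟩, hA⟩
    constructor
    · rintro ⟨p, q⟩ hpq
      have hp : p < q := (mem_InvS.1 hpq).1
      by_cases hpJ : p ∈ J <;> by_cases hqJ : q ∈ J
      · exact h1 ((cσ1 hp (by simp [hpJ, hqJ])).1 hpq)
      · exact absurd hpq (cσ3 hpJ hqJ)
      · refine mem_InvS.2 ⟨hp, ?_⟩
        show _ < _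
        dsimp only
        rw [Fin.lt_def]
        have ha := (hA q).2 hqJ
        have hb := hA p
        simp only [hpJ, iff_false, not_lt] at hb
        omega
      · exact h1 ((cσ1 hp (by simp [hpJ, hqJ])).1 hpq)
    · rintro ⟨p, q⟩ hpq
      have hp : p < q := (mem_InvS.1 hpq).1
      have hlt : γ q < γ p := (mem_InvS.1 hpq).2
      by_cases hpJ : p ∈ J <;> by_cases hqJ : q ∈ J
      · exact (cρ1 hp (by simp [hpJ, hqJ])).2 (h2 hpq)
      · exfalso
        have ha := (hA p).2 hpJ
        have hb := hA q
        simp only [hqJ, iff_false, not_lt] at hb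
        rw [Fin.lt_def] at hlt
        omega
      · exact cρ2 hp hpJ hqJ
      · exact (cρ1 hp (by simp [hpJ, hqJ])).2 (h2 hpq)
  · rintro ⟨h1, h2⟩
    have hA : ∀ x : Fin (N + 1), ((γ x : ℕ) < m ↔ x ∈ J) := by
      refine sep_count hm γ J hJ ?_
      intro p hp q hq
      rcases lt_trichotomy p q with hlt | heq | hgt
      · by_contra hc
        have hne : γ p ≠ γ q := fun e => hq (by rwa [← γ.injective e])
        have hlt' : γ q < γ p := (hne.lt_or_gt).resolve_left hc
        exact cρ3 hp hq (h2 (mem_InvS.2 ⟨hlt, hlt'⟩))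
      · exact absurd (heq ▸ hp) hq
      · have hmem := h1 (cσ2 hgt hq hp)
        exact (mem_InvS.1 hmem).2
    refine ⟨⟨?_, ?_⟩, hA⟩
    · rintro ⟨p, q⟩ hpq
      have hp : p < q := (mem_InvS.1 hpq).1
      by_cases hpJ : p ∈ J <;> by_cases hqJ : q ∈ J
      · exact h1 ((cσ1 hp (by simp [hpJ, hqJ])).2 hpq)
      · exact absurd hpq (hMixσ hpJ hqJ)
      · exact h1 (cσ2 hp hpJ hqJ)
      · exact h1 ((cσ1 hp (by simp [hpJ, hqJ])).2 hpq)
    · rintro ⟨p, q⟩ hpq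
      have hp : p < q := (mem_InvS.1 hpq).1
      have hmem := h2 hpq
      by_cases hpJ : p ∈ J <;> by_cases hqJ : q ∈ J
      · exact (cρ1 hp (by simp [hpJ, hqJ])).1 hmem
      · exact absurd hmem (cρ3 hpJ hqJ)
      · exact hMixρ hp hpJ hqJ
      · exact (cρ1 hp (by simp [hpJ, hqJ])).1 hmem

end
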